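/- Let q = p^n with p an odd prime, and let f(x) ∈ F_q[x] be a linearized polynomial (f(x) = Σ aᵢ x^{p^i} + f(0)). Then the number of a ∈ F_q for which x ↦ f(x) + a·x is not a bijection of F_q is at most (q-1)/(p-1). In particular, for at least ((p-2)/(p-1))·q values of a, f(x) + a·x is a permutation polynomial of F_q. -/
import Mathlib


open Polynomial

/-- For `F_q` of odd characteristic `p` and a linearized polynomial `f`, the number of
`a ∈ F_q` such that `x ↦ f(x) + a·x` is not a bijection is at most `(q-1)/(p-1)`;
in particular at least `((p-2)/(p-1))·q` values of `a` give a permutation. -/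
theorem stmt5 (p n : ℕ) (hp : p.Prime) (hodd : Odd p)
    (F : Type*) [Field F] [Fintype F] [CharP F p] (hq : Fintype.card F = p ^ n)
    (f : Polynomial F)
    (hf : ∃ (m : ℕ) (a : ℕ → F),
      f = (∑ i ∈ Finset.range m, C (a i) * X ^ (p ^ i)) + C (f.coeff 0)) :
    (Nat.card {a : F | ¬ Function.Bijective (fun x : F => f.eval x + a * x)} : ℝ)
        ≤ ((Fintype.card F : ℝ) - 1) / (p - 1) ∧
    (Nat.card {a : F | Function.Bijective (fun x : F => f.eval x + a * x)} : ℝ)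
        ≥ ((p : ℝ) - 2) / ((p : ℝ) - 1) * Fintype.card F := by
  haveI : Fact p.Prime := ⟨hp⟩
  have hp3 : 3 ≤ p := by
    have h2 := hp.two_le
    have h3 := Nat.odd_iff.mp hodd
    omega
  obtain ⟨m, c, hfc⟩ := hf
  set g : F → F := fun x => ∑ i ∈ Finset.range m, c i * x ^ (p ^ i) with hg
  have heval : ∀ x : F, f.eval x = g x + f.coeff 0 := by
    intro x
    conv_lhs => rw [hfc]
    simp [hg, eval_finset_sum]
  have hg0 : g 0 = 0 := by
    simp [hg, zero_pow (pow_ne_zero _ hp.pos.ne')]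
  have hgadd : ∀ x y : F, g (x + y) = g x + g y := by
    intro x y
    simp only [hg]
    rw [← Finset.sum_add_distrib]
    refine Finset.sum_congr rfl fun i _ => ?_
    rw [add_pow_char_pow, mul_add]
  have hgnat : ∀ (k : ℕ) (x : F), g ((k : F) * x) = (k : F) * g x := by
    intro k
    induction k with
    | zero => intro x; simp [hg0]
    | succ k ih => intro x; push_cast; rw [add_mul, one_mul, hgadd, ih, add_mul, one_mul]
  -- bad set
  set S : Set F := {a : F | ¬ Function.Bijective (fun x : F => f.eval x + a * x)} with hS
  have hker : ∀ a ∈ S, ∃ z : F, z ≠ 0 ∧ g z + a * z = 0 := by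
    intro a ha
    rw [hS, Set.mem_setOf_eq, ← Finite.injective_iff_bijective, Function.not_injective_iff] at ha
    obtain ⟨x, y, hxy, hne⟩ := ha
    refine ⟨x - y, sub_ne_zero.mpr hne, ?_⟩
    have : g x + a * x = g y + a * y := by
      have := hxy
      rw [heval x, heval y] at this
      linear_combination this
    have hgsub : g (x - y) = g x - g y := by
      have := hgadd (x - y) y
      rw [sub_add_cancel] at this
      linear_combination -this
    linear_combination hgsub + this
  classical
  -- choice of kernel element
  choose z hz0 hza using hker
  have hcne : ∀ k : Fin (p - 1), (((k : ℕ) + 1 : ℕ) : F) ≠ 0 := by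
    intro k h
    have hd := (CharP.cast_eq_zero_iff F p _).mp h
    have := Nat.le_of_dvd (by omega) hd
    have := k.2
    omega
  -- the injection
  have hinj : ∃ Φ : S × Fin (p - 1) → {x : F // x ≠ 0}, Function.Injective Φ := by
    refine ⟨fun q => ⟨((q.2 : ℕ) + 1 : ℕ) * z q.1.1 q.1.2, ?_⟩, ?_⟩
    · exact mul_ne_zero (hcne q.2) (hz0 _ _)
    · rintro ⟨⟨a, ha⟩, k⟩ ⟨⟨b, hb⟩, j⟩ hΦ
      simp only [Subtype.mk.injEq] at hΦ
      -- common value w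
      set w : F := ((k : ℕ) + 1 : ℕ) * z a ha with hw
      have hwne : w ≠ 0 := mul_ne_zero (hcne k) (hz0 _ _)
      have hwa : g w + a * w = 0 := by
        rw [hw, hgnat]
        linear_combination (((k : ℕ) + 1 : ℕ) : F) * hza a ha
      have hwb : g w + b * w = 0 := by
        rw [hΦ, hgnat]
        linear_combination (((j : ℕ) + 1 : ℕ) : F) * hza b hb
      have hab : a = b := by
        have : (a - b) * w = 0 := by linear_combination hwa - hwb
        rcases mul_eq_zero.mp this with h | h
        · exact sub_eq_zero.mp h
        · exact absurd h hwne
      subst hab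
      have hkj : ((k : ℕ) + 1 : ℕ) = ((j : ℕ) + 1 : ℕ) := by
        have hz := hz0 a ha
        have : (((k : ℕ) + 1 : ℕ) : F) = (((j : ℕ) + 1 : ℕ) : F) :=
          mul_right_cancel₀ hz hΦ
        exact CharP.natCast_injOn_Iio F p (by simp only [Set.mem_Iio]; have := k.2; omega)
          (by simp only [Set.mem_Iio]; have := j.2; omega) this
      have : (k : ℕ) = (j : ℕ) := by omega
      simp [Prod.ext_iff, Fin.ext_iff, this]
  obtain ⟨Φ, hΦinj⟩ := hinj
  have hcount : Nat.card S * (p - 1) ≤ Fintype.card F - 1 := by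
    have h1 := Nat.card_le_card_of_injective Φ hΦinj
    rw [Nat.card_prod, Nat.card_eq_fintype_card (α := Fin (p - 1)), Fintype.card_fin] at h1
    have h2 : Nat.card {x : F // x ≠ 0} = Fintype.card F - 1 := by
      rw [Nat.card_eq_fintype_card, Fintype.card_subtype_compl, Fintype.card_subtype_eq]
    omega
  have hqpos : 1 ≤ Fintype.card F := Fintype.card_pos
  -- real versions
  have hp1 : (1 : ℝ) < (p : ℝ) - 1 := by
    have : (3 : ℝ) ≤ p := by exact_mod_cast hp3
    linarith
  have hbadR : (Nat.card S : ℝ) ≤ ((Fintype.card F : ℝ) - 1) / ((p : ℝ) - 1) := by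
    rw [le_div_iff₀ (by linarith)]
    have : ((Nat.card S * (p - 1) : ℕ) : ℝ) ≤ ((Fintype.card F - 1 : ℕ) : ℝ) := by
      exact_mod_cast hcount
    push_cast [Nat.cast_sub hqpos, Nat.cast_sub hp.one_lt.le] at this
    linarith
  refine ⟨hbadR, ?_⟩
  -- good set cardinality
  have h1 : Fintype.card {a : F // ¬ Function.Bijective (fun x : F => f.eval x + a * x)}
      = Fintype.card F - Fintype.card {a : F // Function.Bijective (fun x : F => f.eval x + a * x)} :=
    Fintype.card_subtype_compl _
  have h2 : Fintype.card {a : F // Function.Bijective (fun x : F => f.eval x + a * x)}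
      ≤ Fintype.card F := Fintype.card_subtype_le _
  have hcompl : Nat.card {a : F | Function.Bijective (fun x : F => f.eval x + a * x)}
      = Fintype.card F - Nat.card S := by
    rw [hS]
    simp only [Nat.card_eq_fintype_card, Set.coe_setOf]
    omega
  have hSle : Nat.card S ≤ Fintype.card F := by
    rw [← Nat.card_eq_fintype_card (α := F)]
    exact Nat.card_le_card_of_injective _ Subtype.val_injective
  rw [hcompl]
  have hcast : ((Fintype.card F - Nat.card S : ℕ) : ℝ)
      = (Fintype.card F : ℝ) - (Nat.card S : ℝ) := by
    push_cast [Nat.cast_sub hSle]; ring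
  rw [ge_iff_le, hcast]
  rw [div_mul_eq_mul_div, div_le_iff₀ (by linarith)]
  rw [le_div_iff₀ (by linarith)] at hbadR
  have hq1 : (1 : ℝ) ≤ (Fintype.card F : ℝ) := by exact_mod_cast hqpos
  nlinarith [hbadR]
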